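/- Let H, K₁, K₂ be real Hilbert spaces and A : H → K₁ × K₂ a continuous linear map with dense range (equivalently, with injective adjoint A*). Let c₁ ∈ K₁, c₂ ∈ K₂ and ρ₁, ρ₂ > 0, and define the dual functional D(f⁰, f¹) := ½‖A*(f⁰, f¹)‖²_H − ⟨f⁰, c₁⟩ − ⟨f¹, c₂⟩ + ρ₁‖f⁰‖ + ρ₂‖f¹‖. Then D is strictly convex and coercive (D(f) → ∞ as ‖f‖ → ∞), and D attains its infimum over K₁ × K₂ at exactly one point. -/

import Mathlib

open scoped RealInnerProductSpace

private lemma aux_lsc_norm {X : Type*} [TopologicalSpace X]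
    {E : Type*} [NormedAddCommGroup E] [InnerProductSpace ℝ E]
    {F : X → E} (h : ∀ w : E, Continuous fun x => ⟪F x, w⟫) :
    LowerSemicontinuous fun x => ‖F x‖ := by
  intro x y hy
  replace hy : y < ‖F x‖ := hy
  rcases lt_or_ge y 0 with hy0 | hy0
  · exact Filter.Eventually.of_forall fun x' => hy0.trans_le (norm_nonneg _)
  · have hFx : F x ≠ 0 := by
      intro h0
      rw [h0, norm_zero] at hy
      exact absurd hy (not_lt.mpr hy0)
    set w : E := ‖F x‖⁻¹ • F x with hw
    have hnw : ‖w‖ = 1 := by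
      rw [hw, norm_smul, norm_inv, norm_norm,
        inv_mul_cancel₀ (norm_ne_zero_iff.mpr hFx)]
    have hFxw : ⟪F x, w⟫ = ‖F x‖ := by
      rw [hw, real_inner_smul_right, real_inner_self_eq_norm_mul_norm]
      field_simp
    have hylt : y < ⟪F x, w⟫ := by rw [hFxw]; exact hy
    filter_upwards [((h w).tendsto x).eventually (eventually_gt_nhds hylt)] with x' hx'
    calc y < ⟪F x', w⟫ := hx'
      _ ≤ ‖F x'‖ * ‖w‖ := real_inner_le_norm _ _
      _ = ‖F x'‖ := by rw [hnw, mul_one]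

private lemma aux_lsc_min {X : Type*} [TopologicalSpace X] [T2Space X]
    {s : Set X} (hs : IsCompact s) (hne : s.Nonempty)
    {f : X → ℝ} (hf : LowerSemicontinuous f) :
    ∃ x ∈ s, ∀ y ∈ s, f x ≤ f y := by
  haveI : Nonempty s := hne.to_subtype
  set t : s → Set X := fun y => s ∩ f ⁻¹' Set.Iic (f y) with ht
  have htd : Directed (· ⊇ ·) t := by
    intro y₁ y₂
    rcases le_total (f (y₁ : X)) (f (y₂ : X)) with h | h
    · exact ⟨y₁, subset_rfl, fun x hx =>
        ⟨hx.1, Set.mem_preimage.mpr (Set.mem_Iic.mpr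
          (le_trans (Set.mem_Iic.mp (Set.mem_preimage.mp hx.2)) h))⟩⟩
    · exact ⟨y₂, fun x hx =>
        ⟨hx.1, Set.mem_preimage.mpr (Set.mem_Iic.mpr
          (le_trans (Set.mem_Iic.mp (Set.mem_preimage.mp hx.2)) h))⟩, subset_rfl⟩
  have htn : ∀ y, (t y).Nonempty := fun y =>
    ⟨y, y.2, Set.mem_preimage.mpr (Set.mem_Iic.mpr le_rfl)⟩
  have htc : ∀ y, IsCompact (t y) := fun y => hs.inter_right (hf.isClosed_preimage _)
  have htcl : ∀ y, IsClosed (t y) := fun y =>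
    hs.isClosed.inter (hf.isClosed_preimage _)
  obtain ⟨x, hx⟩ :=
    IsCompact.nonempty_iInter_of_directed_nonempty_isCompact_isClosed t htd htn htc htcl
  have hx' : ∀ y : s, x ∈ t y := Set.mem_iInter.mp hx
  exact ⟨x, (hx' (Classical.arbitrary s)).1, fun y hy =>
    Set.mem_Iic.mp (Set.mem_preimage.mp (hx' ⟨y, hy⟩).2)⟩

set_option maxHeartbeats 1600000 in
/-- The dual functional
D(f⁰,f¹) = ½‖A*(f⁰,f¹)‖² − ⟨f⁰,c₁⟩ − ⟨f¹,c₂⟩ + ρ₁‖f⁰‖ + ρ₂‖f¹‖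
of the leader's minimal-norm problem (A of dense range, ρ₁, ρ₂ > 0) is
strictly convex and coercive, and attains its infimum at exactly one point. -/
theorem stmt_16 {H K₁ K₂ : Type*}
    [NormedAddCommGroup H] [InnerProductSpace ℝ H] [CompleteSpace H]
    [NormedAddCommGroup K₁] [InnerProductSpace ℝ K₁] [CompleteSpace K₁]
    [NormedAddCommGroup K₂] [InnerProductSpace ℝ K₂] [CompleteSpace K₂]
    (A₁ : H →L[ℝ] K₁) (A₂ : H →L[ℝ] K₂)
    (hdense : DenseRange (fun w : H => (A₁ w, A₂ w)))
    (c₁ : K₁) (c₂ : K₂) (ρ₁ ρ₂ : ℝ) (hρ₁ : 0 < ρ₁) (hρ₂ : 0 < ρ₂)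
    (D : K₁ × K₂ → ℝ)
    (hD : ∀ f : K₁ × K₂, D f
      = (1 / 2) * ‖ContinuousLinearMap.adjoint A₁ f.1
            + ContinuousLinearMap.adjoint A₂ f.2‖ ^ 2
        - ⟪f.1, c₁⟫ - ⟪f.2, c₂⟫ + ρ₁ * ‖f.1‖ + ρ₂ * ‖f.2‖) :
    StrictConvexOn ℝ Set.univ D ∧
    Filter.Tendsto D (Filter.comap (fun f : K₁ × K₂ => ‖f‖) Filter.atTop)
      Filter.atTop ∧
    ∃! fstar : K₁ × K₂, ∀ f : K₁ × K₂, D fstar ≤ D f := by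
  classical
  obtain ⟨T, hT⟩ : ∃ T : K₁ × K₂ → H, ∀ f : K₁ × K₂,
      T f = ContinuousLinearMap.adjoint A₁ f.1 + ContinuousLinearMap.adjoint A₂ f.2 :=
    ⟨_, fun _ => rfl⟩
  have hDT : ∀ f : K₁ × K₂,
      D f = (1 / 2) * ‖T f‖ ^ 2 - ⟪f.1, c₁⟫ - ⟪f.2, c₂⟫ + ρ₁ * ‖f.1‖ + ρ₂ * ‖f.2‖ := by
    intro f; rw [hD, hT]
  have hTinner : ∀ (f : K₁ × K₂) (w : H), ⟪T f, w⟫ = ⟪f.1, A₁ w⟫ + ⟪f.2, A₂ w⟫ := by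
    intro f w
    rw [hT, inner_add_left, ContinuousLinearMap.adjoint_inner_left,
      ContinuousLinearMap.adjoint_inner_left]
  -- injectivity of T (from dense range of A)
  have hTinj : ∀ f : K₁ × K₂, T f = 0 → f = 0 := by
    intro f hf
    have hg : (fun y : K₁ × K₂ => ⟪f.1, y.1⟫ + ⟪f.2, y.2⟫) = fun _ => (0 : ℝ) := by
      apply hdense.equalizer
      · exact (continuous_const.inner continuous_fst).add
          (continuous_const.inner continuous_snd)
      · exact continuous_const
      · funext w
        show ⟪f.1, A₁ w⟫ + ⟪f.2, A₂ w⟫ = (0 : ℝ)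
        rw [← hTinner, hf, inner_zero_left]
    have h2 := congrFun hg f
    simp only [real_inner_self_eq_norm_sq] at h2
    have h3 : ‖f.1‖ = 0 ∧ ‖f.2‖ = 0 := by
      constructor <;> nlinarith [norm_nonneg f.1, norm_nonneg f.2, sq_nonneg ‖f.1‖,
        sq_nonneg ‖f.2‖]
    have := norm_eq_zero.mp h3.1
    have := norm_eq_zero.mp h3.2
    exact Prod.ext (by assumption) (by assumption)
  have hTsub : ∀ x y : K₁ × K₂, T (x - y) = T x - T y := by
    intro x y
    simp only [hT, Prod.fst_sub, Prod.snd_sub, map_sub]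
    abel
  -- the key convexity estimate
  have key : ∀ x y : K₁ × K₂, ∀ a b : ℝ, 0 ≤ a → 0 ≤ b → a + b = 1 →
      D (a • x + b • y) + a * b * (1 / 2) * ‖T x - T y‖ ^ 2 ≤ a * D x + b * D y := by
    intro x y a b ha hb hab
    obtain rfl : b = 1 - a := by linarith
    have hz1 : (a • x + (1 - a) • y).1 = a • x.1 + (1 - a) • y.1 := rfl
    have hz2 : (a • x + (1 - a) • y).2 = a • x.2 + (1 - a) • y.2 := rfl
    have hTz : T (a • x + (1 - a) • y) = a • T x + (1 - a) • T y := by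
      simp only [hT, hz1, hz2, map_add, map_smul, smul_add]
      abel
    rw [hDT, hDT, hDT, hz1, hz2, hTz]
    clear hz1 hz2 hTz hD hDT hT hTinner
    have e1 : (1 / 2 : ℝ) * ‖a • T x + (1 - a) • T y‖ ^ 2
        = a * ((1 / 2) * ‖T x‖ ^ 2) + (1 - a) * ((1 / 2) * ‖T y‖ ^ 2)
          - a * (1 - a) * (1 / 2) * ‖T x - T y‖ ^ 2 := by
      have h1 := norm_add_sq_real (a • T x) ((1 - a) • T y)
      have h2 := norm_sub_sq_real (T x) (T y)
      have h3 : ‖a • T x‖ = a * ‖T x‖ := by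
        rw [norm_smul, Real.norm_eq_abs, abs_of_nonneg ha]
      have h4 : ‖(1 - a) • T y‖ = (1 - a) * ‖T y‖ := by
        rw [norm_smul, Real.norm_eq_abs, abs_of_nonneg hb]
      have h5 : ⟪a • T x, (1 - a) • T y⟫ = a * ((1 - a) * ⟪T x, T y⟫) := by
        rw [real_inner_smul_left, real_inner_smul_right]
      rw [h1, h3, h4, h5, h2]; ring
    have e2 : ⟪a • x.1 + (1 - a) • y.1, c₁⟫ = a * ⟪x.1, c₁⟫ + (1 - a) * ⟪y.1, c₁⟫ := by
      rw [inner_add_left, real_inner_smul_left, real_inner_smul_left]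
    have e3 : ⟪a • x.2 + (1 - a) • y.2, c₂⟫ = a * ⟪x.2, c₂⟫ + (1 - a) * ⟪y.2, c₂⟫ := by
      rw [inner_add_left, real_inner_smul_left, real_inner_smul_left]
    have e4 : ‖a • x.1 + (1 - a) • y.1‖ ≤ a * ‖x.1‖ + (1 - a) * ‖y.1‖ := by
      refine (norm_add_le _ _).trans ?_
      rw [norm_smul, norm_smul, Real.norm_eq_abs, Real.norm_eq_abs,
        abs_of_nonneg ha, abs_of_nonneg hb]
    have e5 : ‖a • x.2 + (1 - a) • y.2‖ ≤ a * ‖x.2‖ + (1 - a) * ‖y.2‖ := by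
      refine (norm_add_le _ _).trans ?_
      rw [norm_smul, norm_smul, Real.norm_eq_abs, Real.norm_eq_abs,
        abs_of_nonneg ha, abs_of_nonneg hb]
    rw [e1, e2, e3]
    have e4' := mul_le_mul_of_nonneg_left e4 hρ₁.le
    have e5' := mul_le_mul_of_nonneg_left e5 hρ₂.le
    nlinarith [e4', e5']
  -- strict convexity
  have strict : StrictConvexOn ℝ Set.univ D := by
    refine ⟨convex_univ, fun x _ y _ hxy a b ha hb hab => ?_⟩
    have hk := key x y a b ha.le hb.le hab
    have hTne : T x - T y ≠ 0 := by
      intro h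
      apply hxy
      have : T (x - y) = 0 := by rw [hTsub, h]
      have := hTinj _ this
      exact sub_eq_zero.mp this
    have hpos : 0 < a * b * (1 / 2) * ‖T x - T y‖ ^ 2 := by
      have := norm_pos_iff.mpr hTne
      positivity
    rw [smul_eq_mul, smul_eq_mul]
    linarith
  -- choose w with A w close to (c₁, c₂)
  set ρm : ℝ := min ρ₁ ρ₂ with hρm
  have hρm0 : 0 < ρm := lt_min hρ₁ hρ₂
  obtain ⟨w, hw⟩ : ∃ w : H, dist (c₁, c₂) (A₁ w, A₂ w) < ρm / 2 := by
    rcases Metric.mem_closure_iff.mp (hdense (c₁, c₂)) (ρm / 2) (by positivity)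
      with ⟨y, ⟨v, rfl⟩, hy⟩
    exact ⟨v, hy⟩
  have hw1 : ‖c₁ - A₁ w‖ ≤ ρm / 2 := by
    rw [← dist_eq_norm]
    rw [Prod.dist_eq] at hw
    exact (le_max_left _ _).trans hw.le
  have hw2 : ‖c₂ - A₂ w‖ ≤ ρm / 2 := by
    rw [← dist_eq_norm]
    rw [Prod.dist_eq] at hw
    exact (le_max_right _ _).trans hw.le
  -- coercivity bound
  have bound : ∀ f : K₁ × K₂, ρm / 2 * ‖f‖ - (1 / 2) * ‖w‖ ^ 2 ≤ D f := by
    intro f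
    have h1 : ⟪f.1, c₁⟫ = ⟪f.1, A₁ w⟫ + ⟪f.1, c₁ - A₁ w⟫ := by
      rw [← inner_add_right]
      congr 1
      abel
    have h2 : ⟪f.2, c₂⟫ = ⟪f.2, A₂ w⟫ + ⟪f.2, c₂ - A₂ w⟫ := by
      rw [← inner_add_right]
      congr 1
      abel
    have h3 : ⟪f.1, c₁ - A₁ w⟫ ≤ ‖f.1‖ * (ρm / 2) :=
      (real_inner_le_norm _ _).trans (mul_le_mul_of_nonneg_left hw1 (norm_nonneg _))
    have h4 : ⟪f.2, c₂ - A₂ w⟫ ≤ ‖f.2‖ * (ρm / 2) :=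
      (real_inner_le_norm _ _).trans (mul_le_mul_of_nonneg_left hw2 (norm_nonneg _))
    have h5 : ⟪f.1, A₁ w⟫ + ⟪f.2, A₂ w⟫ ≤ ‖T f‖ * ‖w‖ :=
      (hTinner f w).symm.trans_le (real_inner_le_norm _ _)
    have h6 : ‖f‖ ≤ ‖f.1‖ + ‖f.2‖ := by
      rw [Prod.norm_def]
      exact max_le (le_add_of_nonneg_right (norm_nonneg _))
        (le_add_of_nonneg_left (norm_nonneg _))
    have h7 : ρm ≤ ρ₁ := min_le_left _ _
    have h8 : ρm ≤ ρ₂ := min_le_right _ _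
    rw [hDT]
    nlinarith [sq_nonneg (‖T f‖ - ‖w‖), norm_nonneg f.1, norm_nonneg f.2,
      mul_le_mul_of_nonneg_left h6 (half_pos hρm0).le,
      mul_nonneg (sub_nonneg.mpr h7) (norm_nonneg f.1),
      mul_nonneg (sub_nonneg.mpr h8) (norm_nonneg f.2)]
  -- coercivity
  have coer : Filter.Tendsto D (Filter.comap (fun f : K₁ × K₂ => ‖f‖) Filter.atTop)
      Filter.atTop := by
    refine Filter.tendsto_atTop_mono bound ?_
    simp only [sub_eq_add_neg]
    exact Filter.tendsto_atTop_add_const_right _ _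
      (Filter.tendsto_comap.const_mul_atTop (half_pos hρm0))
  -- existence of a minimizer via weak compactness
  set b0 : ℝ := (1 / 2) * ‖w‖ ^ 2 with hb0
  set R : ℝ := max 1 ((2 / ρm) * (D 0 + b0 + 1)) with hR
  have hR0 : (0 : ℝ) ≤ R := le_trans zero_le_one (le_max_left _ _)
  have hout : ∀ f : K₁ × K₂, R < ‖f‖ → D 0 < D f := by
    intro f hf
    have hb := bound f
    have h2 : (2 / ρm) * (D 0 + b0 + 1) < ‖f‖ := (le_max_right _ _).trans_lt hf
    have h3 : ρm / 2 * ((2 / ρm) * (D 0 + b0 + 1)) = D 0 + b0 + 1 := by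
      field_simp
    have h4 := mul_lt_mul_of_pos_left h2 (half_pos hρm0)
    rw [h3] at h4
    linarith
  -- the weak-star setting
  obtain ⟨ψ, hψ⟩ : ∃ ψ : WeakDual ℝ K₁ × WeakDual ℝ K₂ → K₁ × K₂,
      ∀ g, ψ g = ((InnerProductSpace.toDual ℝ K₁).symm (WeakDual.toStrongDual g.1),
        (InnerProductSpace.toDual ℝ K₂).symm (WeakDual.toStrongDual g.2)) :=
    ⟨_, fun _ => rfl⟩
  have hψ1 : ∀ (g : WeakDual ℝ K₁ × WeakDual ℝ K₂) (y : K₁), ⟪(ψ g).1, y⟫ = g.1 y := by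
    intro g y
    rw [hψ]
    exact InnerProductSpace.toDual_symm_apply
  have hψ2 : ∀ (g : WeakDual ℝ K₁ × WeakDual ℝ K₂) (y : K₂), ⟪(ψ g).2, y⟫ = g.2 y := by
    intro g y
    rw [hψ]
    exact InnerProductSpace.toDual_symm_apply
  obtain ⟨Φ, hΦ⟩ : ∃ Φ : K₁ × K₂ → WeakDual ℝ K₁ × WeakDual ℝ K₂,
      ∀ f, Φ f = (StrongDual.toWeakDual (InnerProductSpace.toDual ℝ K₁ f.1),
        StrongDual.toWeakDual (InnerProductSpace.toDual ℝ K₂ f.2)) :=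
    ⟨_, fun _ => rfl⟩
  have hψΦ : ∀ f : K₁ × K₂, ψ (Φ f) = f := by
    intro f
    rw [hψ, hΦ]
    simp
  set S : Set (WeakDual ℝ K₁ × WeakDual ℝ K₂) :=
    (WeakDual.toStrongDual ⁻¹' Metric.closedBall 0 R) ×ˢ
      (WeakDual.toStrongDual ⁻¹' Metric.closedBall 0 R) with hS
  have hScomp : IsCompact S :=
    (WeakDual.isCompact_closedBall (0 : StrongDual ℝ K₁) R).prod
      (WeakDual.isCompact_closedBall (0 : StrongDual ℝ K₂) R)
  have hmemS : ∀ f : K₁ × K₂, ‖f‖ ≤ R → Φ f ∈ S := by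
    intro f hf
    rw [hΦ, hS]
    constructor <;>
      simp only [Set.mem_preimage, Metric.mem_closedBall, dist_zero_right]
    · calc ‖WeakDual.toStrongDual (StrongDual.toWeakDual
            (InnerProductSpace.toDual ℝ K₁ f.1))‖
          = ‖f.1‖ := by simp
        _ ≤ ‖f‖ := norm_fst_le f
        _ ≤ R := hf
    · calc ‖WeakDual.toStrongDual (StrongDual.toWeakDual
            (InnerProductSpace.toDual ℝ K₂ f.2))‖
          = ‖f.2‖ := by simp
        _ ≤ ‖f‖ := norm_snd_le f
        _ ≤ R := hf
  have hSne : S.Nonempty := ⟨Φ 0, hmemS 0 (by simp [hR0])⟩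
  -- lower semicontinuity of D ∘ ψ
  have lscT : LowerSemicontinuous fun g : WeakDual ℝ K₁ × WeakDual ℝ K₂ => ‖T (ψ g)‖ := by
    apply aux_lsc_norm
    intro v
    have hfun : (fun g : WeakDual ℝ K₁ × WeakDual ℝ K₂ => ⟪T (ψ g), v⟫)
        = fun g => g.1 (A₁ v) + g.2 (A₂ v) := by
      funext g
      rw [hTinner, hψ1, hψ2]
    rw [hfun]
    exact ((WeakDual.eval_continuous (A₁ v)).comp continuous_fst).add
      ((WeakDual.eval_continuous (A₂ v)).comp continuous_snd)
  have lsc1 : LowerSemicontinuous fun g : WeakDual ℝ K₁ × WeakDual ℝ K₂ => ‖(ψ g).1‖ := by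
    apply aux_lsc_norm
    intro v
    have hfun : (fun g : WeakDual ℝ K₁ × WeakDual ℝ K₂ => ⟪(ψ g).1, v⟫)
        = fun g => g.1 v := by
      funext g; rw [hψ1]
    rw [hfun]
    exact (WeakDual.eval_continuous v).comp continuous_fst
  have lsc2 : LowerSemicontinuous fun g : WeakDual ℝ K₁ × WeakDual ℝ K₂ => ‖(ψ g).2‖ := by
    apply aux_lsc_norm
    intro v
    have hfun : (fun g : WeakDual ℝ K₁ × WeakDual ℝ K₂ => ⟪(ψ g).2, v⟫)
        = fun g => g.2 v := by
      funext g; rw [hψ2]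
    rw [hfun]
    exact (WeakDual.eval_continuous v).comp continuous_snd
  have monoq : Monotone fun t : ℝ => (1 / 2) * max t 0 ^ 2 := by
    intro s t hst
    have h1 : max s 0 ≤ max t 0 := max_le_max hst le_rfl
    have h2 : (0 : ℝ) ≤ max s 0 := le_max_right _ _
    nlinarith
  have contq : Continuous fun t : ℝ => (1 / 2) * max t 0 ^ 2 := by fun_prop
  have lscq : LowerSemicontinuous
      fun g : WeakDual ℝ K₁ × WeakDual ℝ K₂ => (1 / 2) * max ‖T (ψ g)‖ 0 ^ 2 :=
    contq.comp_lowerSemicontinuous lscT monoq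
  have mono1 : Monotone fun t : ℝ => ρ₁ * max t 0 :=
    fun s t hst => mul_le_mul_of_nonneg_left (max_le_max hst le_rfl) hρ₁.le
  have mono2 : Monotone fun t : ℝ => ρ₂ * max t 0 :=
    fun s t hst => mul_le_mul_of_nonneg_left (max_le_max hst le_rfl) hρ₂.le
  have lscn1 : LowerSemicontinuous
      fun g : WeakDual ℝ K₁ × WeakDual ℝ K₂ => ρ₁ * max ‖(ψ g).1‖ 0 :=
    (by fun_prop : Continuous fun t : ℝ => ρ₁ * max t 0).comp_lowerSemicontinuous lsc1 mono1
  have lscn2 : LowerSemicontinuous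
      fun g : WeakDual ℝ K₁ × WeakDual ℝ K₂ => ρ₂ * max ‖(ψ g).2‖ 0 :=
    (by fun_prop : Continuous fun t : ℝ => ρ₂ * max t 0).comp_lowerSemicontinuous lsc2 mono2
  have contl : Continuous fun g : WeakDual ℝ K₁ × WeakDual ℝ K₂ =>
      -(g.1 c₁) - g.2 c₂ := by
    exact (((WeakDual.eval_continuous c₁).comp continuous_fst).neg).sub
      ((WeakDual.eval_continuous c₂).comp continuous_snd)
  have lscD : LowerSemicontinuous fun g : WeakDual ℝ K₁ × WeakDual ℝ K₂ => D (ψ g) := by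
    have hfun : (fun g : WeakDual ℝ K₁ × WeakDual ℝ K₂ => D (ψ g))
        = fun g => (((1 / 2) * max ‖T (ψ g)‖ 0 ^ 2 + (-(g.1 c₁) - g.2 c₂))
            + ρ₁ * max ‖(ψ g).1‖ 0) + ρ₂ * max ‖(ψ g).2‖ 0 := by
      funext g
      rw [hDT, max_eq_left (norm_nonneg _), max_eq_left (norm_nonneg _),
        max_eq_left (norm_nonneg _), ← hψ1 g c₁, ← hψ2 g c₂]
      ring
    rw [hfun]
    exact ((lscq.add contl.lowerSemicontinuous).add lscn1).add lscn2
  obtain ⟨g₀, hg₀S, hg₀⟩ := aux_lsc_min hScomp hSne lscD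
  -- ψ g₀ is a global minimizer
  have hmin : ∀ f : K₁ × K₂, D (ψ g₀) ≤ D f := by
    intro f
    have h0 : D (ψ g₀) ≤ D 0 := by
      have := hg₀ (Φ 0) (hmemS 0 (by simp [hR0]))
      rwa [hψΦ 0] at this
    by_cases hf : ‖f‖ ≤ R
    · have := hg₀ (Φ f) (hmemS f hf)
      rwa [hψΦ f] at this
    · exact h0.trans (hout f (not_le.mp hf)).le
  refine ⟨strict, coer, ψ g₀, hmin, ?_⟩
  intro y hy
  by_contra hne
  have h1 := strict.2 (Set.mem_univ y) (Set.mem_univ (ψ g₀)) hne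
    (by norm_num : (0 : ℝ) < 1 / 2) (by norm_num : (0 : ℝ) < 1 / 2) (by norm_num)
  have h2 := hy ((1 / 2 : ℝ) • y + (1 / 2 : ℝ) • ψ g₀)
  have h3 := hmin y
  rw [smul_eq_mul, smul_eq_mul] at h1
  linarith
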